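/- Let h : ℝ → ℝ be continuously differentiable. Define χ on the half-plane {(ξ,η) ∈ ℝ² : ξ > 0} by χ(ξ,η) = ρ·h(θ − ln ρ), where ρ = √(ξ² + η²) and θ = arctan(η/ξ). Then χ satisfies the invariance equation χ − (ξ − η)·χ_ξ − (ξ + η)·χ_η = 0 at every point of {ξ > 0}. -/

import Mathlib

/-- The spiral ansatz `χ(ξ,η) = ρ·h(θ − ln ρ)` (with `ρ = √(ξ²+η²)`,
`θ = arctan(η/ξ)`) satisfies the invariance equation
`χ − (ξ − η)·χ_ξ − (ξ + η)·χ_η = 0` on the half-plane `ξ > 0`. -/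
theorem spiral_ansatz_is_phi_invariant
    (h : ℝ → ℝ) (hh : ContDiff ℝ 1 h)
    (χ : ℝ → ℝ → ℝ)
    (hχ : ∀ ξ η : ℝ, χ ξ η =
      Real.sqrt (ξ ^ 2 + η ^ 2) *
        h (Real.arctan (η / ξ) - Real.log (Real.sqrt (ξ ^ 2 + η ^ 2)))) :
    ∀ ξ η : ℝ, 0 < ξ →
      χ ξ η - (ξ - η) * deriv (fun s => χ s η) ξ
        - (ξ + η) * deriv (fun s => χ ξ s) η = 0 := by
  intro ξ η hξ
  have hsum : (0:ℝ) < ξ ^ 2 + η ^ 2 := by positivity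
  set ρ := Real.sqrt (ξ ^ 2 + η ^ 2) with hρdef
  have hρpos : 0 < ρ := Real.sqrt_pos.mpr hsum
  have hρsq : ρ ^ 2 = ξ ^ 2 + η ^ 2 := Real.sq_sqrt hsum.le
  set u := Real.arctan (η / ξ) - Real.log ρ with hu
  have hhd : HasDerivAt h (deriv h u) u :=
    ((hh.differentiable one_ne_zero) u).hasDerivAt
  -- derivative in ξ direction
  have h1 : HasDerivAt (fun s : ℝ => s ^ 2 + η ^ 2) (2 * ξ) ξ := by
    simpa using (hasDerivAt_pow 2 ξ).add_const (η ^ 2)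
  have h2 : HasDerivAt (fun s : ℝ => Real.sqrt (s ^ 2 + η ^ 2)) (ξ / ρ) ξ := by
    have := (Real.hasDerivAt_sqrt hsum.ne').comp ξ h1
    refine this.congr_deriv ?_
    field_simp
    ring
  have h3 : HasDerivAt (fun s : ℝ => η / s) (-η / ξ ^ 2) ξ := by
    simpa [div_eq_mul_inv, mul_comm, neg_div] using (hasDerivAt_inv hξ.ne').const_mul η
  have h4 : HasDerivAt (fun s : ℝ => Real.arctan (η / s)) (-η / (ξ ^ 2 + η ^ 2)) ξ := by
    have := (Real.hasDerivAt_arctan (η / ξ)).comp ξ h3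
    refine this.congr_deriv ?_
    field_simp
  have h5 : HasDerivAt (fun s : ℝ => Real.log (Real.sqrt (s ^ 2 + η ^ 2)))
      (ρ⁻¹ * (ξ / ρ)) ξ := by have := (Real.hasDerivAt_log hρpos.ne').comp ξ h2; exact this
  have h6 : HasDerivAt (fun s : ℝ => Real.arctan (η / s) - Real.log (Real.sqrt (s ^ 2 + η ^ 2)))
      (-η / (ξ ^ 2 + η ^ 2) - ρ⁻¹ * (ξ / ρ)) ξ := h4.sub h5
  have h8 : HasDerivAt (fun s : ℝ =>
      Real.sqrt (s ^ 2 + η ^ 2) *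
        h (Real.arctan (η / s) - Real.log (Real.sqrt (s ^ 2 + η ^ 2))))
      (ξ / ρ * h u + ρ * (deriv h u * (-η / (ξ ^ 2 + η ^ 2) - ρ⁻¹ * (ξ / ρ)))) ξ :=
    h2.mul (hhd.comp ξ h6)
  have hD1 : deriv (fun s => χ s η) ξ
      = ξ / ρ * h u + ρ * (deriv h u * (-η / (ξ ^ 2 + η ^ 2) - ρ⁻¹ * (ξ / ρ))) := by
    have : (fun s => χ s η) = fun s : ℝ =>
        Real.sqrt (s ^ 2 + η ^ 2) *
          h (Real.arctan (η / s) - Real.log (Real.sqrt (s ^ 2 + η ^ 2))) := by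
      funext s; exact hχ s η
    rw [this, h8.deriv]
  -- derivative in η direction
  have k1 : HasDerivAt (fun t : ℝ => ξ ^ 2 + t ^ 2) (2 * η) η := by
    simpa using ((hasDerivAt_pow 2 η).const_add (ξ ^ 2))
  have k2 : HasDerivAt (fun t : ℝ => Real.sqrt (ξ ^ 2 + t ^ 2)) (η / ρ) η := by
    have := (Real.hasDerivAt_sqrt hsum.ne').comp η k1
    refine this.congr_deriv ?_
    field_simp
    ring
  have k3 : HasDerivAt (fun t : ℝ => t / ξ) (1 / ξ) η := by
    simpa [div_eq_mul_inv] using (hasDerivAt_id η).mul_const ξ⁻¹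
  have k4 : HasDerivAt (fun t : ℝ => Real.arctan (t / ξ)) (ξ / (ξ ^ 2 + η ^ 2)) η := by
    have := (Real.hasDerivAt_arctan (η / ξ)).comp η k3
    refine this.congr_deriv ?_
    field_simp
  have k5 : HasDerivAt (fun t : ℝ => Real.log (Real.sqrt (ξ ^ 2 + t ^ 2)))
      (ρ⁻¹ * (η / ρ)) η := by have := (Real.hasDerivAt_log hρpos.ne').comp η k2; exact this
  have k6 : HasDerivAt (fun t : ℝ => Real.arctan (t / ξ) - Real.log (Real.sqrt (ξ ^ 2 + t ^ 2)))
      (ξ / (ξ ^ 2 + η ^ 2) - ρ⁻¹ * (η / ρ)) η := k4.sub k5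
  have k8 : HasDerivAt (fun t : ℝ =>
      Real.sqrt (ξ ^ 2 + t ^ 2) *
        h (Real.arctan (t / ξ) - Real.log (Real.sqrt (ξ ^ 2 + t ^ 2))))
      (η / ρ * h u + ρ * (deriv h u * (ξ / (ξ ^ 2 + η ^ 2) - ρ⁻¹ * (η / ρ)))) η :=
    k2.mul (hhd.comp η k6)
  have hD2 : deriv (fun t => χ ξ t) η
      = η / ρ * h u + ρ * (deriv h u * (ξ / (ξ ^ 2 + η ^ 2) - ρ⁻¹ * (η / ρ))) := by
    have : (fun t => χ ξ t) = fun t : ℝ =>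
        Real.sqrt (ξ ^ 2 + t ^ 2) *
          h (Real.arctan (t / ξ) - Real.log (Real.sqrt (ξ ^ 2 + t ^ 2))) := by
      funext t; exact hχ ξ t
    rw [this, k8.deriv]
  have hχval : χ ξ η = ρ * h u := hχ ξ η
  rw [hχval, hD1, hD2, ← hρsq]
  rw [hu]
  generalize h (Real.arctan (η / ξ) - Real.log ρ) = H
  generalize deriv h (Real.arctan (η / ξ) - Real.log ρ) = H'
  field_simp
  linear_combination H * hρsq
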